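/- Theorem 5, dual part: under the covariance assumptions, if the dual problem has an optimal solution (a dual feasible pair (Y, ν) with s(Y, ν) ≤ s(X', λ') for all dual feasible (X', λ')), then it has an optimal solution (X, λ) that is G-invariant: (U g) * X * (U g)† = X for all g ∈ G, and λ j = λ (g • j) for all g ∈ G and j ∈ Fin J. -/

import Mathlib

open Matrix Complex
open scoped ComplexOrder

noncomputable section

/-- A POVM with `M` outcomes: each detection operator is positive semidefinite
and they sum to the identity. -/
def IsPOVM {n : Type*} [Fintype n] [DecidableEq n] {M : ℕ}
    (P : Fin M → Matrix n n ℂ) : Prop :=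
  (∀ m, (P m).PosSemidef) ∧ ∑ m, P m = 1

/-- Membership in the feasible set `𝓜ᵐᵐ`. -/
def Feasible {n : Type*} [Fintype n] [DecidableEq n] {M J : ℕ}
    (a : Fin J → Fin M → Matrix n n ℂ) (b : Fin J → ℝ)
    (P : Fin M → Matrix n n ℂ) : Prop :=
  IsPOVM P ∧ ∀ j, ∑ m, ((a j m * P m).trace).re ≤ b j

/-- The primal objective `f(Π)`. -/
def primalObj {n : Type*} [Fintype n] {M : ℕ}
    (c : Fin M → Matrix n n ℂ) (P : Fin M → Matrix n n ℂ) : ℝ :=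
  ∑ m, ((c m * P m).trace).re

/-- The operator `z m λ = c m - ∑ j, λ j • a j m`. -/
def zOp {M J : ℕ} {n : Type*}
    (c : Fin M → Matrix n n ℂ) (a : Fin J → Fin M → Matrix n n ℂ)
    (lam : Fin J → ℝ) (m : Fin M) : Matrix n n ℂ :=
  c m - ∑ j, (lam j : ℂ) • a j m

/-- The dual objective `s(X, λ)`. -/
def dualObj {n : Type*} [Fintype n] {J : ℕ}
    (b : Fin J → ℝ) (X : Matrix n n ℂ) (lam : Fin J → ℝ) : ℝ :=
  X.trace.re + ∑ j, lam j * b j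

/-- Dual feasibility: `X` Hermitian, `λ ≥ 0`, and `X - z m λ` positive semidefinite. -/
def DualFeasible {n : Type*} [Fintype n] {M J : ℕ}
    (c : Fin M → Matrix n n ℂ) (a : Fin J → Fin M → Matrix n n ℂ)
    (X : Matrix n n ℂ) (lam : Fin J → ℝ) : Prop :=
  X.IsHermitian ∧ (∀ j, 0 ≤ lam j) ∧ ∀ m, (X - zOp c a lam m).PosSemidef


/-- The action `g · A = (U g) * A * (U g)†` of a group on matrices induced by a
unitary representation `U`. -/
def conjAct {n : Type*} [Fintype n] [DecidableEq n] {G : Type*} [Group G]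
    (U : G →* Matrix.unitaryGroup n ℂ) (g : G) (A : Matrix n n ℂ) : Matrix n n ℂ :=
  (U g : Matrix n n ℂ) * A * star (U g : Matrix n n ℂ)

/-- The mapping `κ_g` sending `Φ` to `m ↦ (U g)⁻¹ * Φ (g • m) * (U g)`
(note `(U g)⁻¹ = (U g)† = star (U g)`). -/
def kappa {n : Type*} [Fintype n] [DecidableEq n] {G : Type*} [Group G] {M : ℕ}
    [MulAction G (Fin M)]
    (U : G →* Matrix.unitaryGroup n ℂ) (g : G)
    (Φ : Fin M → Matrix n n ℂ) : Fin M → Matrix n n ℂ :=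
  fun m => star (U g : Matrix n n ℂ) * Φ (g • m) * (U g : Matrix n n ℂ)


section Helpers

variable {n : Type*} [Fintype n] [DecidableEq n] {G : Type*} [Group G]
  (U : G →* Matrix.unitaryGroup n ℂ)

lemma conjAct_isHermitian (g : G) {A : Matrix n n ℂ} (h : A.IsHermitian) :
    (conjAct U g A).IsHermitian := by
  unfold conjAct
  rw [Matrix.star_eq_conjTranspose]
  unfold Matrix.IsHermitian
  rw [Matrix.conjTranspose_mul, Matrix.conjTranspose_mul, Matrix.conjTranspose_conjTranspose,
    h.eq, Matrix.mul_assoc]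

lemma conjAct_posSemidef (g : G) {A : Matrix n n ℂ} (h : A.PosSemidef) :
    (conjAct U g A).PosSemidef := by
  simpa [conjAct, Matrix.star_eq_conjTranspose] using
    h.mul_mul_conjTranspose_same (U g : Matrix n n ℂ)

lemma conjAct_trace (g : G) (A : Matrix n n ℂ) : (conjAct U g A).trace = A.trace := by
  unfold conjAct
  rw [Matrix.trace_mul_cycle, Matrix.UnitaryGroup.star_mul_self, Matrix.one_mul]

lemma conjAct_sub (g : G) (A B : Matrix n n ℂ) :
    conjAct U g (A - B) = conjAct U g A - conjAct U g B := by
  simp [conjAct, Matrix.sub_mul, Matrix.mul_sub]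

lemma conjAct_smul (g : G) (r : ℂ) (A : Matrix n n ℂ) :
    conjAct U g (r • A) = r • conjAct U g A := by
  simp [conjAct, Matrix.smul_mul, Matrix.mul_smul]

lemma conjAct_sum (g : G) {ι : Type*} (s : Finset ι) (f : ι → Matrix n n ℂ) :
    conjAct U g (∑ i ∈ s, f i) = ∑ i ∈ s, conjAct U g (f i) := by
  simp [conjAct, Finset.sum_mul, Finset.mul_sum]

lemma conjAct_conjAct (g h : G) (A : Matrix n n ℂ) :
    conjAct U g (conjAct U h A) = conjAct U (g * h) A := by
  simp only [conjAct, _root_.map_mul, Submonoid.coe_mul, StarMul.star_mul, Matrix.mul_assoc]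

omit [DecidableEq n] in
lemma posSemidef_real_smul {r : ℝ} (hr : 0 ≤ r) {A : Matrix n n ℂ}
    (h : A.PosSemidef) : ((r : ℂ) • A).PosSemidef := by
  constructor
  · unfold Matrix.IsHermitian
    rw [Matrix.conjTranspose_smul, h.1.eq, Complex.star_def, Complex.conj_ofReal]
  · intro x
    have hr' : (0 : ℂ) ≤ (r : ℂ) := by exact_mod_cast hr
    exact (h.smul hr').2 x

omit [DecidableEq n] in
lemma posSemidef_sum {ι : Type*} (s : Finset ι) (f : ι → Matrix n n ℂ)
    (h : ∀ i ∈ s, (f i).PosSemidef) : (∑ i ∈ s, f i).PosSemidef :=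
  Finset.sum_induction f _ (fun _ _ hA hB => hA.add hB) Matrix.PosSemidef.zero h

end Helpers

/-- Theorem 5, dual part: if the dual problem has an optimal solution, it has a
`G`-invariant optimal solution. -/
theorem exists_invariant_dual_optimal
    {n : Type*} [Fintype n] [DecidableEq n] [Nonempty n]
    {G : Type*} [Group G] [Fintype G]
    {M J : ℕ} [MulAction G (Fin M)] [MulAction G (Fin J)]
    (U : G →* Matrix.unitaryGroup n ℂ)
    (c : Fin M → Matrix n n ℂ) (a : Fin J → Fin M → Matrix n n ℂ) (b : Fin J → ℝ)
    (hc : ∀ m, (c m).IsHermitian) (ha : ∀ j m, (a j m).IsHermitian)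
    (hcova : ∀ (g : G) j m, conjAct U g (a j m) = a (g • j) (g • m))
    (hcovb : ∀ (g : G) j, b j = b (g • j))
    (hcovc : ∀ (g : G) m, conjAct U g (c m) = c (g • m))
    (hopt : ∃ Y ν, DualFeasible c a Y ν ∧
      ∀ X' lam', DualFeasible c a X' lam' → dualObj b Y ν ≤ dualObj b X' lam') :
    ∃ (X : Matrix n n ℂ) (lam : Fin J → ℝ),
      DualFeasible c a X lam ∧
      (∀ X' lam', DualFeasible c a X' lam' → dualObj b X lam ≤ dualObj b X' lam') ∧
      (∀ g : G, conjAct U g X = X) ∧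
      (∀ (g : G) (j : Fin J), lam j = lam (g • j)) := by
  classical
  obtain ⟨Y, ν, ⟨hYH, hν0, hYpsd⟩, hmin⟩ := hopt
  have hcard : 0 < (Fintype.card G : ℝ) := by exact_mod_cast Fintype.card_pos
  set k : ℝ := (Fintype.card G : ℝ)⁻¹ with hkdef
  have hk0 : 0 ≤ k := le_of_lt (inv_pos.mpr hcard)
  have hk1r : k * (Fintype.card G : ℝ) = 1 := inv_mul_cancel₀ (ne_of_gt hcard)
  have hk1 : (k : ℂ) * (Fintype.card G : ℂ) = 1 := by
    have := congrArg (Complex.ofReal) hk1r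
    push_cast at this
    simpa using this
  set X : Matrix n n ℂ := (k : ℂ) • ∑ g : G, conjAct U g Y with hXdef
  set lam : Fin J → ℝ := fun j => k * ∑ g : G, ν (g⁻¹ • j) with hlamdef
  -- conjugated z-operators
  have hz : ∀ (g : G) (m : Fin M),
      conjAct U g (zOp c a ν (g⁻¹ • m)) = zOp c a (fun j => ν (g⁻¹ • j)) m := by
    intro g m
    unfold zOp
    rw [conjAct_sub, conjAct_sum, hcovc g (g⁻¹ • m), smul_inv_smul]
    congr 1
    rw [← Equiv.sum_comp (MulAction.toPerm g) (fun j => ((ν (g⁻¹ • j) : ℝ) : ℂ) • a j m)]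
    refine Finset.sum_congr rfl fun j _ => ?_
    rw [conjAct_smul, hcova g j (g⁻¹ • m), smul_inv_smul]
    simp [MulAction.toPerm_apply, inv_smul_smul]
  have hfeasg : ∀ (g : G) (m : Fin M),
      (conjAct U g Y - zOp c a (fun j => ν (g⁻¹ • j)) m).PosSemidef := by
    intro g m
    rw [← hz g m, ← conjAct_sub]
    exact conjAct_posSemidef U g (hYpsd (g⁻¹ • m))
  -- averaged z-operator
  have hzavg : ∀ m : Fin M, (k : ℂ) • ∑ g : G, zOp c a (fun j => ν (g⁻¹ • j)) m
      = zOp c a lam m := by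
    intro m
    unfold zOp
    rw [Finset.sum_sub_distrib, smul_sub]
    congr 1
    · rw [Finset.sum_const, Finset.card_univ, ← Nat.cast_smul_eq_nsmul ℂ, smul_smul, hk1,
        one_smul]
    · rw [Finset.sum_comm, Finset.smul_sum]
      refine Finset.sum_congr rfl fun j _ => ?_
      rw [← Finset.sum_smul, smul_smul]
      congr 1
      show (k : ℂ) * ∑ g : G, ((ν (g⁻¹ • j) : ℝ) : ℂ) = ((k * ∑ g : G, ν (g⁻¹ • j) : ℝ) : ℂ)
      push_cast
      ring
  have hXz : ∀ m : Fin M, X - zOp c a lam m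
      = ∑ g : G, (k : ℂ) • (conjAct U g Y - zOp c a (fun j => ν (g⁻¹ • j)) m) := by
    intro m
    rw [← Finset.smul_sum, Finset.sum_sub_distrib, smul_sub, hXdef, hzavg m]
  -- the objective is unchanged by averaging
  have hbG : ∀ g : G, ∑ j, ν (g⁻¹ • j) * b j = ∑ j, ν j * b j := by
    intro g
    rw [← Equiv.sum_comp (MulAction.toPerm g) (fun j => ν (g⁻¹ • j) * b j)]
    refine Finset.sum_congr rfl fun j _ => ?_
    simp only [MulAction.toPerm_apply, inv_smul_smul]
    rw [← hcovb g j]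
  have hobj : dualObj b X lam = dualObj b Y ν := by
    unfold dualObj
    congr 1
    · -- trace part
      have ht : X.trace = Y.trace := by
        rw [hXdef, Matrix.trace_smul, Matrix.trace_sum]
        have : ∑ g : G, (conjAct U g Y).trace = (Fintype.card G : ℂ) * Y.trace := by
          simp [conjAct_trace, Finset.sum_const, Finset.card_univ, nsmul_eq_mul]
        rw [this, smul_eq_mul, ← mul_assoc, hk1, one_mul]
      rw [ht]
    · -- multiplier part
      have : ∑ j, lam j * b j = k * ∑ g : G, ∑ j, ν (g⁻¹ • j) * b j := by
        rw [hlamdef]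
        simp only [mul_assoc, Finset.sum_mul]
        rw [← Finset.mul_sum]
        congr 1
        exact Finset.sum_comm ..
      rw [this]
      simp only [hbG]
      rw [Finset.sum_const, Finset.card_univ, nsmul_eq_mul, ← mul_assoc, hk1r, one_mul]
  have hfeas : DualFeasible c a X lam := by
    refine ⟨?_, ?_, ?_⟩
    · -- Hermitian
      unfold Matrix.IsHermitian
      rw [hXdef, Matrix.conjTranspose_smul, Complex.star_def, Complex.conj_ofReal,
        Matrix.conjTranspose_sum]
      congr 1
      exact Finset.sum_congr rfl fun g _ => (conjAct_isHermitian U g hYH).eq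
    · intro j
      exact mul_nonneg hk0 (Finset.sum_nonneg fun g _ => hν0 _)
    · intro m
      rw [hXz m]
      exact posSemidef_sum _ _ fun g _ => posSemidef_real_smul hk0 (hfeasg g m)
  refine ⟨X, lam, hfeas, ?_, ?_, ?_⟩
  · intro X' lam' h'
    rw [hobj]
    exact hmin X' lam' h'
  · -- invariance of X
    intro h
    rw [hXdef, conjAct_smul, conjAct_sum]
    congr 1
    calc ∑ g : G, conjAct U h (conjAct U g Y)
        = ∑ g : G, conjAct U (h * g) Y :=
          Finset.sum_congr rfl fun g _ => conjAct_conjAct U h g Y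
      _ = ∑ g : G, conjAct U g Y := Equiv.sum_comp (Equiv.mulLeft h) (fun g => conjAct U g Y)
  · -- invariance of lam
    intro g j
    rw [hlamdef]
    simp only
    congr 1
    rw [← Equiv.sum_comp (Equiv.mulLeft g) (fun h => ν (h⁻¹ • (g • j)))]
    refine Finset.sum_congr rfl fun h _ => ?_
    simp only [Equiv.coe_mulLeft, _root_.mul_inv_rev, mul_smul, inv_smul_smul]
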